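/- If A ⊆ ℕ has asymptotic density and A ∩ B = ∅, then d̲̲(A ∪ B) = d(A) + d̲̲(B). -/

import Mathlib

open Filter

/-- `cnt A n` = number of elements of `A` in `[1, n]`, as a real number. -/
noncomputable def cnt (A : Set ℕ) (n : ℕ) : ℝ :=
  ∑ k ∈ Finset.Icc 1 n, A.indicator (fun _ => (1 : ℝ)) k

/-- `A` has asymptotic density `x`. -/
def HasDens (A : Set ℕ) (x : ℝ) : Prop :=
  Filter.Tendsto (fun n => cnt A n / n) Filter.atTop (nhds x)

/-- `lld A` = sup of densities of subsets of `A` having asymptotic density. -/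
noncomputable def lld (A : Set ℕ) : ℝ := sSup {x : ℝ | ∃ B ⊆ A, HasDens B x}

/-- `uud A` = inf of densities of supersets of `A` having asymptotic density. -/
noncomputable def uud (A : Set ℕ) : ℝ := sInf {x : ℝ | ∃ C : Set ℕ, A ⊆ C ∧ HasDens C x}

/- ### Basic counting lemmas -/

lemma ind_nonneg (X : Set ℕ) (k : ℕ) : 0 ≤ X.indicator (fun _ => (1:ℝ)) k := by
  by_cases h : k ∈ X <;> simp [Set.indicator_apply, h]

lemma ind_le_one (X : Set ℕ) (k : ℕ) : X.indicator (fun _ => (1:ℝ)) k ≤ 1 := by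
  by_cases h : k ∈ X <;> simp [Set.indicator_apply, h]

lemma cnt_zero (X : Set ℕ) : cnt X 0 = 0 := by simp [cnt]

lemma cnt_succ (X : Set ℕ) (n : ℕ) :
    cnt X (n+1) = cnt X n + X.indicator (fun _ => (1:ℝ)) (n+1) := by
  rw [cnt, cnt, Finset.sum_Icc_succ_top (Nat.succ_le_succ (Nat.zero_le n))]

lemma cnt_nonneg (X : Set ℕ) (n : ℕ) : 0 ≤ cnt X n :=
  Finset.sum_nonneg fun k _ => ind_nonneg X k

lemma cnt_le (X : Set ℕ) : ∀ n : ℕ, cnt X n ≤ n := by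
  intro n
  induction n with
  | zero => simp [cnt_zero]
  | succ n ih =>
    rw [cnt_succ]
    have := ind_le_one X (n+1)
    push_cast
    linarith

lemma cnt_mono (X : Set ℕ) {m n : ℕ} (h : m ≤ n) : cnt X m ≤ cnt X n := by
  induction n, h using Nat.le_induction with
  | base => exact le_refl _
  | succ n hmn ih =>
    rw [cnt_succ]
    have := ind_nonneg X (n+1)
    linarith

lemma window_mono {X Y : Set ℕ} (hXY : X ⊆ Y) {m n : ℕ} (h : m ≤ n) :
    cnt X n - cnt X m ≤ cnt Y n - cnt Y m := by
  induction n, h using Nat.le_induction with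
  | base => simp
  | succ n hmn ih =>
    rw [cnt_succ, cnt_succ]
    have hi : X.indicator (fun _ => (1:ℝ)) (n+1) ≤ Y.indicator (fun _ => (1:ℝ)) (n+1) := by
      by_cases hx : (n+1) ∈ X
      · simp [Set.indicator_of_mem hx, Set.indicator_of_mem (hXY hx)]
      · simp [Set.indicator_of_notMem hx]
        exact ind_nonneg Y (n+1)
    linarith

lemma cnt_union {X Y : Set ℕ} (h : Disjoint X Y) (n : ℕ) :
    cnt (X ∪ Y) n = cnt X n + cnt Y n := by
  rw [cnt, cnt, cnt, ← Finset.sum_add_distrib]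
  apply Finset.sum_congr rfl
  intro k _
  rw [Set.indicator_union_of_disjoint h]

lemma cnt_split (C A : Set ℕ) (n : ℕ) :
    cnt C n = cnt (C ∩ A) n + cnt (C \ A) n := by
  have hd : Disjoint (C ∩ A) (C \ A) := by
    rw [Set.disjoint_left]
    rintro x ⟨-, hxA⟩ ⟨-, hx⟩
    exact hx hxA
  rw [← cnt_union hd, Set.inter_union_diff]

/- ### Basic density lemmas -/

lemma hasDens_nonneg {C : Set ℕ} {x : ℝ} (h : HasDens C x) : 0 ≤ x :=
  ge_of_tendsto h (Filter.Eventually.of_forall fun n =>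
    div_nonneg (cnt_nonneg C n) (Nat.cast_nonneg n))

lemma hasDens_le_one {C : Set ℕ} {x : ℝ} (h : HasDens C x) : x ≤ 1 :=
  le_of_tendsto h (Filter.Eventually.of_forall fun n =>
    div_le_one_of_le₀ (cnt_le C n) (Nat.cast_nonneg n))

lemma hasDens_empty : HasDens (∅ : Set ℕ) 0 := by
  have : (fun n : ℕ => cnt (∅ : Set ℕ) n / n) = fun _ => (0:ℝ) := by
    funext n
    simp [cnt]
  rw [HasDens, this]
  exact tendsto_const_nhds

lemma densSet_nonempty (X : Set ℕ) : {x : ℝ | ∃ B ⊆ X, HasDens B x}.Nonempty :=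
  ⟨0, ∅, Set.empty_subset X, hasDens_empty⟩

lemma densSet_bddAbove (X : Set ℕ) : BddAbove {x : ℝ | ∃ B ⊆ X, HasDens B x} := by
  refine ⟨1, ?_⟩
  rintro y ⟨Bs, -, hB⟩
  exact hasDens_le_one hB

lemma lld_nonneg (X : Set ℕ) : 0 ≤ lld X :=
  le_csSup (densSet_bddAbove X) ⟨∅, Set.empty_subset X, hasDens_empty⟩

lemma hasDens_union {X Y : Set ℕ} {x y : ℝ} (h : Disjoint X Y)
    (hX : HasDens X x) (hY : HasDens Y y) : HasDens (X ∪ Y) (x + y) := by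
  have : (fun n : ℕ => cnt (X ∪ Y) n / n) =
      fun n : ℕ => cnt X n / n + cnt Y n / n := by
    funext n
    rw [cnt_union h, add_div]
  rw [HasDens, this]
  exact hX.add hY

/- ### The greedy construction -/

open scoped Classical in
/-- Greedy counting function: number of selected elements (selects elements of `D`
as long as the count stays below `t * n`). -/
noncomputable def gc (t : ℝ) (D : Set ℕ) : ℕ → ℕ :=
  fun n => Nat.rec 0
    (fun m c => if (m+1) ∈ D ∧ ((c : ℝ) + 1 ≤ t * ((m:ℝ)+1)) then c+1 else c) n

open scoped Classical in
lemma gc_succ (t : ℝ) (D : Set ℕ) (n : ℕ) :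
    gc t D (n+1) = if (n+1) ∈ D ∧ ((gc t D n : ℝ) + 1 ≤ t * ((n:ℝ)+1))
      then gc t D n + 1 else gc t D n := by
  simp [gc]
  rfl

lemma gc_zero (t : ℝ) (D : Set ℕ) : gc t D 0 = 0 := rfl

/-- The greedily selected set. -/
def gset (t : ℝ) (D : Set ℕ) : Set ℕ := {n : ℕ | gc t D n ≠ gc t D (n-1)}

lemma gset_subset (t : ℝ) (D : Set ℕ) : gset t D ⊆ D := by
  intro n hn
  match n with
  | 0 => exact absurd rfl hn
  | (m+1) =>
    by_cases h : (m+1) ∈ D ∧ ((gc t D m : ℝ) + 1 ≤ t * ((m:ℝ)+1))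
    · exact h.1
    · exfalso
      apply hn
      show gc t D (m+1) = gc t D m
      rw [gc_succ, if_neg h]

lemma cnt_gset (t : ℝ) (D : Set ℕ) : ∀ n, cnt (gset t D) n = gc t D n := by
  intro n
  induction n with
  | zero => simp [cnt_zero, gc_zero]
  | succ n ih =>
    rw [cnt_succ, ih]
    by_cases h : (n+1) ∈ D ∧ ((gc t D n : ℝ) + 1 ≤ t * ((n:ℝ)+1))
    · have hg : gc t D (n+1) = gc t D n + 1 := by rw [gc_succ, if_pos h]
      have hmem : (n+1) ∈ gset t D := by
        show gc t D (n+1) ≠ gc t D n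
        omega
      rw [Set.indicator_of_mem hmem, hg]
      push_cast
      ring
    · have hg : gc t D (n+1) = gc t D n := by rw [gc_succ, if_neg h]
      have hmem : (n+1) ∉ gset t D := by
        show ¬ gc t D (n+1) ≠ gc t D n
        omega
      rw [Set.indicator_of_notMem hmem, hg]
      ring

lemma gc_le (t : ℝ) (D : Set ℕ) (ht : 0 ≤ t) : ∀ n, (gc t D n : ℝ) ≤ t * n := by
  intro n
  induction n with
  | zero => simp [gc_zero]
  | succ n ih =>
    by_cases h : (n+1) ∈ D ∧ ((gc t D n : ℝ) + 1 ≤ t * ((n:ℝ)+1))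
    · rw [gc_succ, if_pos h]
      push_cast
      linarith [h.2]
    · rw [gc_succ, if_neg h]
      have hcast : ((n:ℝ)) ≤ ((n:ℝ)+1) := by linarith
      push_cast
      nlinarith

lemma gc_lower (t : ℝ) (D : Set ℕ) (m : ℕ) : ∀ n, m ≤ n →
    ∃ k, m ≤ k ∧ k ≤ n ∧
      (gc t D k : ℝ) + (cnt D n - cnt D k) ≤ gc t D n ∧
      (k = m ∨ t * k - 1 < gc t D k) := by
  intro n
  induction n with
  | zero =>
    intro hm
    exact ⟨0, hm, le_refl 0, by simp, Or.inl (Nat.le_zero.mp hm).symm⟩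
  | succ n ih =>
    intro hm
    rcases Nat.lt_or_ge n.succ m with h | h
    · omega
    rcases Nat.lt_or_ge n m with h2 | h2
    · -- m = n+1
      have hmeq : m = n + 1 := by omega
      refine ⟨n+1, by omega, le_refl _, by simp, Or.inl hmeq.symm⟩
    obtain ⟨k, hk1, hk2, hk3, hk4⟩ := ih h2
    by_cases hD : (n+1) ∈ D
    · by_cases hc : ((gc t D n : ℝ) + 1 ≤ t * ((n:ℝ)+1))
      · -- taken
        have hg : gc t D (n+1) = gc t D n + 1 := by rw [gc_succ, if_pos ⟨hD, hc⟩]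
        have hcnt : cnt D (n+1) = cnt D n + 1 := by
          rw [cnt_succ, Set.indicator_of_mem hD]
        refine ⟨k, hk1, by omega, ?_, hk4⟩
        rw [hg, hcnt]
        push_cast
        linarith
      · -- skipped: count is full
        have hg : gc t D (n+1) = gc t D n := by
          rw [gc_succ, if_neg]
          tauto
        refine ⟨n+1, by omega, le_refl _, by simp, Or.inr ?_⟩
        rw [hg]
        push_cast
        push_neg at hc
        linarith
    · have hg : gc t D (n+1) = gc t D n := by
        rw [gc_succ, if_neg]
        tauto
      have hcnt : cnt D (n+1) = cnt D n := by
        rw [cnt_succ, Set.indicator_of_notMem hD]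
        ring
      exact ⟨k, hk1, by omega, by rw [hg, hcnt]; exact hk3, hk4⟩

/-- If `D` has the uniform window lower bound at rate `s`, then the greedy set at
target `t ≤ s`, `t ≥ 0`, has density exactly `t`. -/
lemma greedy_hasDens (D : Set ℕ) (s t : ℝ) (ht : 0 ≤ t) (hts : t ≤ s)
    (hW : ∀ ε > (0:ℝ), ∃ N : ℕ, ∀ m n : ℕ, N ≤ m → m ≤ n →
      s * ((n:ℝ) - m) - ε * n ≤ cnt D n - cnt D m) :
    HasDens (gset t D) t := by
  have hs : 0 ≤ s := le_trans ht hts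
  rw [HasDens]
  have hfun : (fun n : ℕ => cnt (gset t D) n / n) = fun n : ℕ => (gc t D n : ℝ) / n := by
    funext n
    rw [cnt_gset]
  rw [hfun]
  rw [Metric.tendsto_atTop]
  intro ε hε
  obtain ⟨N, hN⟩ := hW (ε/4) (by linarith)
  -- choose N₂ with s*N + 1 ≤ (ε/2)*N₂
  obtain ⟨M0, hM0⟩ := exists_nat_ge ((s * N + 1) / (ε/2))
  refine ⟨max (N+1) M0, fun n hn => ?_⟩
  have hnN : N ≤ n := le_trans (Nat.le_succ N) (le_trans (le_max_left _ _) hn)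
  have hn1 : 1 ≤ n := le_trans (Nat.succ_le_succ (Nat.zero_le N)) (le_trans (le_max_left _ _) hn)
  have hnM0 : (M0:ℝ) ≤ n := Nat.cast_le.mpr (le_trans (le_max_right _ _) hn)
  have hnpos : (0:ℝ) < n := by exact_mod_cast hn1
  have hkey : s * N + 1 ≤ (ε/2) * n := by
    rw [div_le_iff₀ (by linarith : (0:ℝ) < ε/2)] at hM0
    calc s * N + 1 ≤ (ε/2) * M0 := by linarith
    _ ≤ (ε/2) * n := by nlinarith
  -- lower bound for gc at n
  obtain ⟨k, hk1, hk2, hk3, hk4⟩ := gc_lower t D N n hnN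
  have hwin : s * ((n:ℝ) - k) - (ε/4) * n ≤ cnt D n - cnt D k := hN k n hk1 hk2
  have hkn : (k:ℝ) ≤ n := Nat.cast_le.mpr hk2
  have hlow : t * n - (3*ε/4) * n ≤ (gc t D n : ℝ) := by
    rcases hk4 with hkm | hkbig
    · -- k = N
      have h0 : (0:ℝ) ≤ gc t D k := Nat.cast_nonneg _
      have hkN : (k:ℝ) = N := by exact_mod_cast congrArg (Nat.cast (R := ℝ)) hkm
      nlinarith [hwin, hk3]
    · -- t*k - 1 < gc k
      have hst : t * ((n:ℝ) - k) ≤ s * ((n:ℝ) - k) := by nlinarith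
      nlinarith [hwin, hk3, hkey]
  have hup : (gc t D n : ℝ) ≤ t * n := gc_le t D ht n
  rw [Real.dist_eq]
  have heq : (gc t D n : ℝ) / n - t = ((gc t D n : ℝ) - t * n) / n := by
    field_simp
  rw [heq, abs_div, abs_of_pos hnpos, div_lt_iff₀ hnpos]
  rw [abs_lt]
  constructor
  · nlinarith
  · nlinarith

/- ### Upper bound: every achievable density of a subset of `A ∪ B` is ≤ a + lld B -/

lemma dens_le_add_lld {A B C : Set ℕ} {a x : ℝ} (hA : HasDens A a)
    (hC : HasDens C x) (hsub : C ⊆ A ∪ B) : x ≤ a + lld B := by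
  have hmain : ∀ ε > (0:ℝ), x - a ≤ lld B + ε := by
    intro ε hε
    rcases le_or_gt (x - a - ε) 0 with hneg | hpos
    · linarith [lld_nonneg B]
    set t := x - a - ε with ht_def
    set s := x - a with hs_def
    have ht : 0 ≤ t := le_of_lt hpos
    have hts : t ≤ s := by simp [ht_def, hs_def]; linarith
    set D := C \ A with hD_def
    -- window property for D
    have hW : ∀ δ > (0:ℝ), ∃ N : ℕ, ∀ m n : ℕ, N ≤ m → m ≤ n →
        s * ((n:ℝ) - m) - δ * n ≤ cnt D n - cnt D m := by
      intro δ hδ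
      rw [HasDens, Metric.tendsto_atTop] at hC hA
      obtain ⟨N₁, hN₁⟩ := hC (δ/4) (by linarith)
      obtain ⟨N₂, hN₂⟩ := hA (δ/4) (by linarith)
      refine ⟨max (max N₁ N₂) 1, fun m n hm hmn => ?_⟩
      have h1 : ∀ j : ℕ, max (max N₁ N₂) 1 ≤ j →
          |cnt C j - x * j| ≤ (δ/4) * j ∧ |cnt A j - a * j| ≤ (δ/4) * j := by
        intro j hj
        have hj1 : 1 ≤ j := le_trans (le_max_right _ _) hj
        have hjpos : (0:ℝ) < j := by exact_mod_cast hj1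
        have hjC := hN₁ j (le_trans (le_trans (le_max_left _ _) (le_max_left _ _)) hj)
        have hjA := hN₂ j (le_trans (le_trans (le_max_right _ _) (le_max_left _ _)) hj)
        rw [Real.dist_eq] at hjC hjA
        constructor
        · have : |cnt C j / j - x| * j ≤ (δ/4) * j := by
            apply mul_le_mul_of_nonneg_right (le_of_lt hjC) (le_of_lt hjpos)
          calc |cnt C j - x * j| = |cnt C j / j - x| * j := by
                rw [← abs_of_pos hjpos, ← abs_mul]
                congr 1
                field_simp
                rw [abs_of_pos hjpos]
                ring
          _ ≤ (δ/4) * j := this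
        · have : |cnt A j / j - a| * j ≤ (δ/4) * j := by
            apply mul_le_mul_of_nonneg_right (le_of_lt hjA) (le_of_lt hjpos)
          calc |cnt A j - a * j| = |cnt A j / j - a| * j := by
                rw [← abs_of_pos hjpos, ← abs_mul]
                congr 1
                field_simp
                rw [abs_of_pos hjpos]
                ring
          _ ≤ (δ/4) * j := this
      obtain ⟨hCm, hAm⟩ := h1 m hm
      obtain ⟨hCn, hAn⟩ := h1 n (le_trans hm hmn)
      have hsplitn := cnt_split C A n
      have hsplitm := cnt_split C A m
      have hwm : cnt (C ∩ A) n - cnt (C ∩ A) m ≤ cnt A n - cnt A m :=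
        window_mono (Set.inter_subset_right) hmn
      rw [abs_le] at hCm hAm hCn hAn
      have hmncast : (m:ℝ) ≤ n := Nat.cast_le.mpr hmn
      have hmpos : (0:ℝ) ≤ m := Nat.cast_nonneg m
      have hδm : (δ/4) * m ≤ (δ/4) * n := by nlinarith
      simp only [hs_def]
      nlinarith [hCm.1, hCm.2, hAm.1, hAm.2, hCn.1, hCn.2, hAn.1, hAn.2]
    -- greedy subset of D has density t
    have hgd : HasDens (gset t D) t := greedy_hasDens D s t ht hts hW
    have hDB : D ⊆ B := by
      intro z hz
      rcases hsub hz.1 with h | h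
      · exact absurd h hz.2
      · exact h
    have htmem : t ∈ {y : ℝ | ∃ Bs ⊆ B, HasDens Bs y} :=
      ⟨gset t D, (gset_subset t D).trans hDB, hgd⟩
    have := le_csSup (densSet_bddAbove B) htmem
    rw [lld]
    linarith
  by_contra hcon
  push_neg at hcon
  have := hmain ((x - a - lld B)/2) (by linarith)
  linarith

theorem stmt_13 (A B : Set ℕ) (a : ℝ) (hA : HasDens A a) (hdisj : A ∩ B = ∅) :
    lld (A ∪ B) = a + lld B := by
  have hABdisj : Disjoint A B := Set.disjoint_iff_inter_eq_empty.mpr hdisj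
  apply le_antisymm
  · -- lld (A ∪ B) ≤ a + lld B
    rw [lld]
    apply csSup_le (densSet_nonempty (A ∪ B))
    rintro y ⟨C, hCsub, hCy⟩
    exact dens_le_add_lld hA hCy hCsub
  · -- a + lld B ≤ lld (A ∪ B)
    have h : lld B ≤ lld (A ∪ B) - a := by
      rw [lld]
      apply csSup_le (densSet_nonempty B)
      rintro y ⟨B', hB'B, hB'y⟩
      have hAB' : Disjoint A B' := hABdisj.mono_right hB'B
      have hmem : a + y ∈ {z : ℝ | ∃ C ⊆ A ∪ B, HasDens C z} :=
        ⟨A ∪ B', Set.union_subset_union_right A hB'B, hasDens_union hAB' hA hB'y⟩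
      have := le_csSup (densSet_bddAbove (A ∪ B)) hmem
      rw [lld]
      linarith
    linarith
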